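/- The class GRLOWJ is not closed under intersection: there exist languages L1, L2 ∈ GRLOWJ with L1 ∩ L2 ∉ GRLOWJ. -/

import Mathlib

open List

/-- Two-letter alphabet. -/
inductive AB : Type | a | b
  deriving DecidableEq, Repr

/-- Three-letter alphabet. -/
inductive ABC : Type | a | b | c
  deriving DecidableEq, Repr

instance : Fintype AB := ⟨⟨{AB.a, AB.b}, by decide⟩, by intro x; cases x <;> decide⟩
instance : Fintype ABC := ⟨⟨{ABC.a, ABC.b, ABC.c}, by decide⟩, by intro x; cases x <;> decide⟩

/-- The Dyck language over the two designated letters `a` (open) and `b` (close):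
balanced words using only `a` and `b`. -/
def Dyck {α : Type} [DecidableEq α] (a b : α) : Set (List α) :=
  {w | (∀ x ∈ w, x = a ∨ x = b) ∧ w.count a = w.count b ∧
       ∀ u, u <+: w → u.count b ≤ u.count a}

/-- `u` contains no word from `S` as a subword (infix). -/
def NoSub {α : Type} (S : Set (List α)) (u : List α) : Prop :=
  ¬ ∃ w ∈ S, w <:+: u

/-! ### Right one-way jumping finite automata -/

structure ROWJFA (α σ : Type) where
  start : σ
  accept : Set σ
  rules : Set (σ × α × σ)
  det : ∀ p a q q', (p, a, q) ∈ rules → (p, a, q') ∈ rules → q = q'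

namespace ROWJFA
variable {α σ : Type}

def sig (A : ROWJFA α σ) (p : σ) : Set α := {a | ∃ q, (p, a, q) ∈ A.rules}

/-- `p x a y ↷ q y x` when `(p,a,q) ∈ R` and `x ∈ (Σ∖Σ_p)*`. -/
inductive Step (A : ROWJFA α σ) : σ × List α → σ × List α → Prop
  | jump {p q : σ} {a : α} (x y : List α) :
      (p, a, q) ∈ A.rules → (∀ b ∈ x, b ∉ A.sig p) →
      Step A (p, x ++ a :: y) (q, y ++ x)

def language (A : ROWJFA α σ) : Set (List α) :=
  {w | ∃ qf ∈ A.accept, Relation.ReflTransGen (Step A) (A.start, w) (qf, [])}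

end ROWJFA

def ROWJ {α : Type} (L : Set (List α)) : Prop :=
  ∃ (σ : Type) (_ : Finite σ) (A : ROWJFA α σ), A.language = L

/-! ### Left one-way jumping finite automata -/

structure LOWJFA (α σ : Type) where
  start : σ
  accept : Set σ
  /-- A rule `(q, a, p)` means: from state `p`, delete `a`, move to state `q`. -/
  rules : Set (σ × α × σ)
  det : ∀ p a q q', (q, a, p) ∈ rules → (q', a, p) ∈ rules → q = q'

namespace LOWJFA
variable {α σ : Type}

def sig (A : LOWJFA α σ) (p : σ) : Set α := {a | ∃ q, (q, a, p) ∈ A.rules}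

/-- `x y q ↶ y a x p` when `(q,a,p) ∈ R` and `x ∈ (Σ∖Σ_p)*`;
configurations are in `Σ* Q`. -/
inductive Step (A : LOWJFA α σ) : List α × σ → List α × σ → Prop
  | jump {p q : σ} {a : α} (x y : List α) :
      (q, a, p) ∈ A.rules → (∀ b ∈ x, b ∉ A.sig p) →
      Step A (y ++ a :: x, p) (x ++ y, q)

def language (A : LOWJFA α σ) : Set (List α) :=
  {w | ∃ qf ∈ A.accept, Relation.ReflTransGen (Step A) (w, A.start) ([], qf)}

end LOWJFA

def LOWJ {α : Type} (L : Set (List α)) : Prop :=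
  ∃ (σ : Type) (_ : Finite σ) (A : LOWJFA α σ), A.language = L

/-! ### Generalized right linear one-way jumping finite automata -/

structure GRLOWJFA (α σ : Type) where
  start : σ
  accept : Set σ
  rules : Set (σ × List α × σ)
  finite : rules.Finite
  ne : ∀ r ∈ rules, r.2.1 ≠ ([] : List α)
  det : ∀ p w q q', (p, w, q) ∈ rules → (p, w, q') ∈ rules → q = q'

namespace GRLOWJFA
variable {α σ : Type}

def sig (A : GRLOWJFA α σ) (p : σ) : Set (List α) := {w | ∃ q, (p, w, q) ∈ A.rules}

/-- Configurations are triples `(t, p, v)` representing `t p v ∈ Σ* Q Σ*`. -/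
inductive Step (A : GRLOWJFA α σ) :
    List α × σ × List α → List α × σ × List α → Prop
  /-- `t p u x v ↷ t u q v`. -/
  | rule {p q : σ} {x : List α} (t u v : List α) :
      (p, x, q) ∈ A.rules →
      NoSub (A.sig p) u →
      (¬ ∃ u₂ x₁ : List α, u₂ ≠ [] ∧ x₁ ≠ [] ∧ u₂ <:+ u ∧ x₁ <+: x ∧ u₂ ++ x₁ = x) →
      Step A (t, p, u ++ x ++ v) (t ++ u, q, v)
  /-- `x p y ↷ p x y`. -/
  | ret {p : σ} (x y : List α) :
      x ≠ [] → NoSub (A.sig p) y →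
      Step A (x, p, y) ([], p, x ++ y)

def language (A : GRLOWJFA α σ) : Set (List α) :=
  {w | ∃ qf ∈ A.accept, Relation.ReflTransGen (Step A) ([], A.start, w) ([], qf, [])}

end GRLOWJFA

def GRLOWJ {α : Type} (L : Set (List α)) : Prop :=
  ∃ (σ : Type) (_ : Finite σ) (A : GRLOWJFA α σ), A.language = L

/-! ### Generalized left linear one-way jumping finite automata -/

structure GLLOWJFA (α σ : Type) where
  start : σ
  accept : Set σ
  /-- A rule `(q, w, p)` means: from state `p`, delete `w`, move to state `q`. -/
  rules : Set (σ × List α × σ)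
  finite : rules.Finite
  ne : ∀ r ∈ rules, r.2.1 ≠ ([] : List α)
  det : ∀ p w q q', (q, w, p) ∈ rules → (q', w, p) ∈ rules → q = q'

namespace GLLOWJFA
variable {α σ : Type}

def sig (A : GLLOWJFA α σ) (p : σ) : Set (List α) := {w | ∃ q, (q, w, p) ∈ A.rules}

/-- Configurations are triples `(v, p, t)` representing `v p t ∈ Σ* Q Σ*`. -/
inductive Step (A : GLLOWJFA α σ) :
    List α × σ × List α → List α × σ × List α → Prop
  /-- `v q u t ↶ v x u p t`. -/
  | rule {p q : σ} {x : List α} (t u v : List α) :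
      (q, x, p) ∈ A.rules →
      NoSub (A.sig p) u →
      (¬ ∃ x₂ u₁ : List α, x₂ ≠ [] ∧ u₁ ≠ [] ∧ x₂ <:+ x ∧ u₁ <+: u ∧ x₂ ++ u₁ = x) →
      Step A (v ++ x ++ u, p, t) (v, q, u ++ t)
  /-- `y x p ↶ y p x`. -/
  | ret {p : σ} (x y : List α) :
      x ≠ [] → NoSub (A.sig p) y →
      Step A (y, p, x) (y ++ x, p, [])

def language (A : GLLOWJFA α σ) : Set (List α) :=
  {w | ∃ qf ∈ A.accept, Relation.ReflTransGen (Step A) (w, A.start, []) ([], qf, [])}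

end GLLOWJFA

def GLLOWJ {α : Type} (L : Set (List α)) : Prop :=
  ∃ (σ : Type) (_ : Finite σ) (A : GLLOWJFA α σ), A.language = L

namespace Stmt17

/-- The language `a*b*`. -/
def L1 : Set (List AB) := {w | ∃ n m, w = replicate n AB.a ++ replicate m AB.b}

/-- The language of words with equally many `a`s and `b`s. -/
def L2 : Set (List AB) := {w | w.count AB.a = w.count AB.b}

/-! ### generic little lemmas -/

lemma nosub_nil {σ : Type} (A : GRLOWJFA AB σ) (p : σ) : NoSub (A.sig p) [] := by
  rintro ⟨w, ⟨q, hq⟩, hinf⟩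
  exact A.ne _ hq (List.infix_nil.mp hinf)

lemma noov_nil {x : List AB} :
    ¬ ∃ u₂ x₁ : List AB, u₂ ≠ [] ∧ x₁ ≠ [] ∧ u₂ <:+ ([]:List AB) ∧ x₁ <+: x ∧ u₂ ++ x₁ = x := by
  rintro ⟨u₂, x₁, h₂, h₁, hs, -, -⟩
  exact h₂ (List.suffix_nil.mp hs)

/-- first-occurrence splitting -/
lemma mem_split_first {x : AB} {y : List AB} (h : x ∈ y) :
    ∃ u v, y = u ++ x :: v ∧ x ∉ u := by
  induction y with
  | nil => cases h
  | cons c y ih =>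
    by_cases hc : c = x
    · exact ⟨[], y, by simp [hc], by simp⟩
    · have hx : x ∈ y := by
        rcases List.mem_cons.mp h with h | h
        · exact absurd h.symm hc
        · exact h
      obtain ⟨u, v, rfl, hu⟩ := ih hx
      exact ⟨c :: u, v, by simp, by simp [hu]; exact fun h => hc h.symm⟩

lemma eq_nil_of_counts {v : List AB} (ha : v.count AB.a = 0) (hb : v.count AB.b = 0) :
    v = [] := by
  cases v with
  | nil => rfl
  | cons c v =>
    cases c
    · simp [List.count_cons] at ha
    · simp [List.count_cons] at hb

/-! ### the `a*b*` machine -/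

inductive St3 : Type | s0 | s1 | s2 deriving DecidableEq

instance : Fintype St3 := ⟨⟨{St3.s0, St3.s1, St3.s2}, by decide⟩, fun x => by cases x <;> decide⟩

def d3 : St3 → AB → St3
  | St3.s0, AB.a => St3.s0
  | St3.s0, AB.b => St3.s1
  | St3.s1, AB.a => St3.s2
  | St3.s1, AB.b => St3.s1
  | St3.s2, _    => St3.s2

def A1 : GRLOWJFA AB St3 where
  start := St3.s0
  accept := {St3.s0, St3.s1}
  rules := Set.range (fun pc : St3 × AB => (pc.1, [pc.2], d3 pc.1 pc.2))
  finite := Set.finite_range _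
  ne := by rintro r ⟨⟨p, c⟩, rfl⟩; simp
  det := by
    rintro p w q q' ⟨⟨p₁, c₁⟩, h₁⟩ ⟨⟨p₂, c₂⟩, h₂⟩
    simp only [Prod.mk.injEq] at h₁ h₂
    obtain ⟨rfl, rfl, rfl⟩ := h₁
    obtain ⟨rfl, hc, rfl⟩ := h₂
    obtain rfl : c₂ = c₁ := by simpa using hc
    rfl

lemma A1_rules_mem {p : St3} {w : List AB} {q : St3} :
    (p, w, q) ∈ A1.rules ↔ ∃ c, w = [c] ∧ q = d3 p c := by
  constructor
  · rintro ⟨⟨p', c⟩, h⟩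
    simp only [Prod.mk.injEq] at h
    obtain ⟨rfl, rfl, rfl⟩ := h
    exact ⟨c, rfl, rfl⟩
  · rintro ⟨c, rfl, rfl⟩
    exact ⟨(p, c), rfl⟩

lemma A1_step_char {p : St3} {v : List AB} {c' : List AB × St3 × List AB}
    (h : GRLOWJFA.Step A1 ([], p, v) c') :
    ∃ c v', v = c :: v' ∧ c' = ([], d3 p c, v') := by
  cases h with
  | rule t u v hr hns hov =>
    obtain ⟨c, rfl, rfl⟩ := A1_rules_mem.mp hr
    -- skipped part must be empty since the machine is complete
    have hu : u = [] := by
      cases u with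
      | nil => rfl
      | cons c₀ u' =>
        exfalso
        exact hns ⟨[c₀], ⟨d3 p c₀, A1_rules_mem.mpr ⟨c₀, rfl, rfl⟩⟩, ⟨[], u', by simp⟩⟩
    subst hu
    exact ⟨c, v, by simp, by simp⟩
  | ret x y hx hns => exact absurd rfl hx

lemma A1_sound {qf : St3} : ∀ (v : List AB) (p : St3),
    Relation.ReflTransGen (GRLOWJFA.Step A1) ([], p, v) ([], qf, []) →
    List.foldl d3 p v = qf := by
  intro v
  induction v with
  | nil =>
    intro p h
    rcases (Relation.ReflTransGen.cases_head h) with h | ⟨c', hstep, -⟩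
    · exact congrArg (fun z => z.2.1) h
    · obtain ⟨c, v', hv, -⟩ := A1_step_char hstep
      cases hv
  | cons c v ih =>
    intro p h
    rcases (Relation.ReflTransGen.cases_head h) with h | ⟨c', hstep, hrest⟩
    · exact absurd (congrArg (fun z => z.2.2) h) (by simp)
    · obtain ⟨c₀, v', hv, rfl⟩ := A1_step_char hstep
      cases hv
      exact ih _ hrest

lemma A1_complete : ∀ (v : List AB) (p : St3),
    Relation.ReflTransGen (GRLOWJFA.Step A1) ([], p, v) ([], List.foldl d3 p v, []) := by
  intro v
  induction v with
  | nil => intro p; exact Relation.ReflTransGen.refl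
  | cons c v ih =>
    intro p
    refine Relation.ReflTransGen.head ?_ (ih (d3 p c))
    have := GRLOWJFA.Step.rule (A := A1) (p := p) (q := d3 p c) (x := [c]) [] [] v
      (A1_rules_mem.mpr ⟨c, rfl, rfl⟩) (nosub_nil A1 p) noov_nil
    simpa using this

lemma d3_s2 : ∀ (v : List AB), List.foldl d3 St3.s2 v = St3.s2 := by
  intro v; induction v with
  | nil => rfl
  | cons c v ih => cases c <;> simpa [d3] using ih

lemma d3_reps : ∀ (n : ℕ), List.foldl d3 St3.s0 (replicate n AB.a) = St3.s0 := by
  intro n; induction n with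
  | zero => rfl
  | succ n ih => simpa [List.replicate_succ, d3] using ih

lemma d3_repb1 : ∀ (n : ℕ), List.foldl d3 St3.s1 (replicate n AB.b) = St3.s1 := by
  intro n; induction n with
  | zero => rfl
  | succ n ih => simpa [List.replicate_succ, d3] using ih

lemma d3_shape : ∀ (w : List AB) (p : St3), p = St3.s0 ∨ p = St3.s1 →
    List.foldl d3 p w = St3.s0 ∨ List.foldl d3 p w = St3.s1 →
    (p = St3.s1 → ∃ m, w = replicate m AB.b) ∧
    (p = St3.s0 → ∃ n m, w = replicate n AB.a ++ replicate m AB.b) := by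
  intro w
  induction w with
  | nil =>
    intro p hp h
    exact ⟨fun _ => ⟨0, rfl⟩, fun _ => ⟨0, 0, rfl⟩⟩
  | cons c w ih =>
    intro p hp h
    constructor
    · rintro rfl
      cases c
      · simp only [List.foldl_cons, d3] at h
        rw [d3_s2] at h
        rcases h with h | h <;> cases h
      · simp only [List.foldl_cons, d3] at h
        obtain ⟨m, rfl⟩ := (ih St3.s1 (Or.inr rfl) h).1 rfl
        exact ⟨m + 1, by simp [List.replicate_succ]⟩
    · rintro rfl
      cases c
      · simp only [List.foldl_cons, d3] at h
        obtain ⟨n, m, rfl⟩ := (ih St3.s0 (Or.inl rfl) h).2 rfl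
        exact ⟨n + 1, m, by simp [List.replicate_succ]⟩
      · simp only [List.foldl_cons, d3] at h
        obtain ⟨m, rfl⟩ := (ih St3.s1 (Or.inr rfl) h).1 rfl
        exact ⟨0, m + 1, by simp [List.replicate_succ]⟩

lemma A1_lang : A1.language = L1 := by
  ext w
  constructor
  · rintro ⟨qf, hacc, hrun⟩
    have hf : List.foldl d3 St3.s0 w = qf := A1_sound w St3.s0 hrun
    have hqf : qf = St3.s0 ∨ qf = St3.s1 := by
      rcases hacc with h | h
      · exact Or.inl h
      · exact Or.inr h
    exact (d3_shape w St3.s0 (Or.inl rfl) (hf ▸ hqf)).2 rfl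
  · rintro ⟨n, m, rfl⟩
    refine ⟨List.foldl d3 St3.s0 (replicate n AB.a ++ replicate m AB.b), ?_, A1_complete _ _⟩
    rw [List.foldl_append, d3_reps]
    cases m with
    | zero => exact Or.inl rfl
    | succ m =>
      rw [List.replicate_succ]
      simp only [List.foldl_cons, d3]
      exact Or.inr (d3_repb1 m)
/-! ### the equal-counts machine -/

def A2 : GRLOWJFA AB Unit where
  start := ()
  accept := {()}
  rules := {((), [AB.a, AB.b], ()), ((), [AB.b, AB.a], ())}
  finite := (Set.finite_singleton _).insert _
  ne := by rintro r (rfl | rfl) <;> simp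
  det := fun p w q q' _ _ => rfl

lemma A2_sig {w : List AB} (h : w ∈ A2.sig ()) : w = [AB.a, AB.b] ∨ w = [AB.b, AB.a] := by
  obtain ⟨q, hq⟩ := h
  rcases hq with h | h
  · exact Or.inl (congrArg (fun z => z.2.1) h)
  · exact Or.inr (congrArg (fun z => z.2.1) h)

/-- If one of the two letters does not occur in `y`, the machine is stuck on `y`. -/
lemma A2_nosub {y : List AB} (h : AB.a ∉ y ∨ AB.b ∉ y) : NoSub (A2.sig ()) y := by
  rintro ⟨w, hw, hinf⟩
  have hsub : ∀ c ∈ w, c ∈ y := fun c hc => hinf.sublist.subset hc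
  rcases A2_sig hw with rfl | rfl <;>
    rcases h with h | h <;>
    [exact h (hsub _ (by simp)); exact h (hsub _ (by simp));
     exact h (hsub _ (by simp)); exact h (hsub _ (by simp))]

/-- one step of the machine preserves the difference of the letter counts -/
lemma A2_step_count {c c' : List AB × Unit × List AB} (h : GRLOWJFA.Step A2 c c') :
    (c.1 ++ c.2.2).count AB.a + (c'.1 ++ c'.2.2).count AB.b
      = (c'.1 ++ c'.2.2).count AB.a + (c.1 ++ c.2.2).count AB.b := by
  cases h with
  | rule t u v hr hns hov =>
    simp only [A2, Set.mem_insert_iff, Set.mem_singleton_iff] at hr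
    rcases hr with h | h <;> cases h <;>
      · simp [List.count_append, List.count_cons]
        omega
  | ret x y hx hns => simp [List.count_append]
lemma A2_run_count {c : List AB × Unit × List AB}
    (h : Relation.ReflTransGen (GRLOWJFA.Step A2) c ([], (), [])) :
    (c.1 ++ c.2.2).count AB.a = (c.1 ++ c.2.2).count AB.b := by
  induction h using Relation.ReflTransGen.head_induction_on with
  | refl => simp
  | head hstep _ ih =>
    have := A2_step_count hstep
    omega

/-- every word containing both letters has a change point -/
lemma change_point : ∀ (v : List AB), AB.a ∈ v → AB.b ∈ v →
    ∃ (c c' : AB) (k : ℕ) (v' : List AB), c ≠ c' ∧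
      v = replicate k c ++ [c, c'] ++ v' := by
  intro v
  induction v with
  | nil => intro h; cases h
  | cons x v ih =>
    intro ha hb
    cases v with
    | nil =>
      exfalso
      cases x
      · simp at hb
      · simp at ha
    | cons y w =>
      by_cases hxy : x = y
      · subst hxy
        have ha' : AB.a ∈ x :: w := by
          rcases List.mem_cons.mp ha with h | h
          · exact h ▸ List.mem_cons_self
          · exact h
        have hb' : AB.b ∈ x :: w := by
          rcases List.mem_cons.mp hb with h | h
          · exact h ▸ List.mem_cons_self
          · exact h
        obtain ⟨c, c', k, v', hne, heq⟩ := ih ha' hb'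
        cases k with
        | zero =>
          simp only [List.replicate, List.nil_append] at heq
          have hy : x = c := by
            have := congrArg (fun l => l.head?) heq
            simpa using this
          subst hy
          exact ⟨x, c', 1, v', hne, by simpa using heq⟩
        | succ k =>
          have hy : x = c := by
            have := congrArg (fun l => l.head?) heq
            simpa [List.replicate_succ] using this
          subst hy
          exact ⟨x, c', k + 2, v', hne, by
            simpa [List.replicate_succ, List.cons_append] using heq⟩
      · exact ⟨x, y, 0, w, hxy, by simp⟩

/-- the overlap condition holds for a two-letter rule word with distinct letters -/
lemma noov_two {u : List AB} {c c' : AB} (hne : c ≠ c') :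
    ¬ ∃ u₂ x₁ : List AB, u₂ ≠ [] ∧ x₁ ≠ [] ∧ u₂ <:+ u ∧ x₁ <+: [c, c'] ∧ u₂ ++ x₁ = [c, c'] := by
  rintro ⟨u₂, x₁, h₂, h₁, hsuf, hpre, heq⟩
  have hlen : u₂.length + x₁.length = 2 := by
    have := congrArg List.length heq; simpa using this
  have h₂l : 1 ≤ u₂.length := List.length_pos_iff.mpr h₂
  have h₁l : 1 ≤ x₁.length := List.length_pos_iff.mpr h₁
  have hx₁ : x₁.length = 1 := by omega
  obtain ⟨e, rfl⟩ : ∃ e, x₁ = [e] := by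
    cases x₁ with
    | nil => simp at hx₁
    | cons e t => cases t with
      | nil => exact ⟨e, rfl⟩
      | cons f t => simp at hx₁
  have he : e = c := by
    rcases hpre with ⟨t, ht⟩
    have := congrArg (fun l => l.head?) ht
    simpa using this
  subst he
  obtain ⟨d, rfl⟩ : ∃ d, u₂ = [d] := by
    have hl : u₂.length = 1 := by omega
    cases u₂ with
    | nil => simp at hl
    | cons g t => cases t with
      | nil => exact ⟨g, rfl⟩
      | cons f t => simp at hl
  simp only [List.cons_append, List.nil_append] at heq
  injection heq with g1 g2
  injection g2 with g3 g4
  exact hne g3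

lemma A2_accept_aux : ∀ (n : ℕ) (t v : List AB),
    2 * (t ++ v).count AB.a + (if t = [] then 0 else 1) ≤ n →
    (t ++ v).count AB.a = (t ++ v).count AB.b →
    Relation.ReflTransGen (GRLOWJFA.Step A2) (t, (), v) ([], (), []) := by
  intro n
  induction n with
  | zero =>
    intro t v hm hbal
    have ht : t = [] := by
      by_contra h; simp [h] at hm
    subst ht
    simp only [List.nil_append] at hm hbal ⊢
    have ha : v.count AB.a = 0 := by omega
    have hb : v.count AB.b = 0 := by omega
    rw [eq_nil_of_counts ha hb]
  | succ n ih =>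
    intro t v hm hbal
    by_cases hboth : AB.a ∈ v ∧ AB.b ∈ v
    · obtain ⟨c, c', k, v', hne, rfl⟩ := change_point v hboth.1 hboth.2
      have hrule : ((), [c, c'], ()) ∈ A2.rules := by
        cases c <;> cases c'
        · exact absurd rfl hne
        · exact Or.inl rfl
        · exact Or.inr rfl
        · exact absurd rfl hne
      have hns : NoSub (A2.sig ()) (replicate k c) := by
        apply A2_nosub
        cases c
        · right; intro h; exact absurd (List.eq_of_mem_replicate h) (by decide)
        · left; intro h; exact absurd (List.eq_of_mem_replicate h) (by decide)
      have hstep : GRLOWJFA.Step A2 (t, (), replicate k c ++ [c, c'] ++ v')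
          (t ++ replicate k c, (), v') :=
        GRLOWJFA.Step.rule t (replicate k c) v' hrule hns (noov_two hne)
      have hca : ([c, c'] : List AB).count AB.a = 1 := by
        cases c <;> cases c' <;> first | exact absurd rfl hne | decide
      have hcb : ([c, c'] : List AB).count AB.b = 1 := by
        cases c <;> cases c' <;> first | exact absurd rfl hne | decide
      refine Relation.ReflTransGen.head hstep (ih (t ++ replicate k c) v' ?_ ?_)
      · simp only [List.count_append, List.append_assoc] at hm ⊢
        rw [hca] at hm
        split_ifs at hm ⊢ <;> omega
      · simp only [List.count_append, List.append_assoc] at hbal ⊢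
        rw [hca, hcb] at hbal
        omega
    · by_cases ht : t = []
      · subst ht
        have hv : v = [] := by
          simp only [List.nil_append] at hbal
          rcases not_and_or.mp hboth with h | h
          · have ha : v.count AB.a = 0 := List.count_eq_zero.mpr h
            exact eq_nil_of_counts ha (by omega)
          · have hb : v.count AB.b = 0 := List.count_eq_zero.mpr h
            exact eq_nil_of_counts (by omega) hb
        subst hv
        exact Relation.ReflTransGen.refl
      · have hstep : GRLOWJFA.Step A2 (t, (), v) ([], (), t ++ v) :=
          GRLOWJFA.Step.ret t v ht (A2_nosub (not_and_or.mp hboth))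
        refine Relation.ReflTransGen.head hstep (ih [] (t ++ v) ?_ hbal)
        rw [if_pos rfl]
        simp only [List.nil_append]
        rw [if_neg ht] at hm
        omega

lemma A2_lang : A2.language = L2 := by
  ext w
  constructor
  · rintro ⟨qf, hacc, hrun⟩
    have := A2_run_count hrun
    simpa [L2] using this
  · intro hw
    refine ⟨(), rfl, A2_accept_aux (2 * w.count AB.a) [] w ?_ ?_⟩
    · simp
    · simpa [L2] using hw
/-! ### impossibility of `{aⁿbⁿ}` -/

section Impossible

variable {σ : Type}

/-- state paths through the rule graph, recording the consumed words -/
inductive Seg (A : GRLOWJFA AB σ) : σ → List (List AB) → σ → Prop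
  | nil (p : σ) : Seg A p [] p
  | cons {p q r : σ} {x : List AB} {l : List (List AB)} :
      (p, x, q) ∈ A.rules → Seg A q l r → Seg A p (x :: l) r

lemma Seg.append {A : GRLOWJFA AB σ} {p q r : σ} {l₁ l₂ : List (List AB)}
    (h₁ : Seg A p l₁ q) (h₂ : Seg A q l₂ r) : Seg A p (l₁ ++ l₂) r := by
  induction h₁ with
  | nil => exact h₂
  | cons hr hs ih => exact Seg.cons hr (ih h₂)

lemma Seg.mem_rules {A : GRLOWJFA AB σ} {p r : σ} {l : List (List AB)}
    (h : Seg A p l r) : ∀ x ∈ l, ∃ p' q', (p', x, q') ∈ A.rules := by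
  induction h with
  | nil => intro x hx; cases hx
  | cons hr hs ih =>
    intro x hx
    rcases List.mem_cons.mp hx with rfl | hx
    · exact ⟨_, _, hr⟩
    · exact ih x hx

lemma Seg.split {A : GRLOWJFA AB σ} {p r : σ} {l : List (List AB)}
    (h : Seg A p l r) : ∀ n, ∃ s, Seg A p (l.take n) s ∧ Seg A s (l.drop n) r := by
  induction h with
  | nil => intro n; exact ⟨_, by simpa using Seg.nil _, by simpa using Seg.nil _⟩
  | @cons p q r' x l hr hs ih =>
    intro n
    cases n with
    | zero => exact ⟨p, Seg.nil p, Seg.cons hr hs⟩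
    | succ n =>
      obtain ⟨s, h1, h2⟩ := ih n
      exact ⟨s, Seg.cons hr h1, h2⟩

lemma Seg.det {A : GRLOWJFA AB σ} {p r r' : σ} {l : List (List AB)}
    (h : Seg A p l r) (h' : Seg A p l r') : r = r' := by
  induction h generalizing r' with
  | nil => cases h'; rfl
  | @cons p q r x l hr hs ih =>
    cases h' with
    | cons hr' hs' =>
      have := A.det _ _ _ _ hr' hr
      subst this
      exact ih hs'

lemma Seg.mid {A : GRLOWJFA AB σ} {p s r : σ} {l₁ l₂ : List (List AB)}
    (h₁ : Seg A p l₁ s) (h : Seg A p (l₁ ++ l₂) r) : Seg A s l₂ r := by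
  induction h₁ with
  | nil => exact h
  | @cons p q s x l hr hs ih =>
    cases h with
    | cons hr' hs' =>
      have := A.det _ _ _ _ hr' hr
      subst this
      exact ih hs'

/-- a `Seg` can be run greedily on the concatenation of its words -/
lemma Seg.run {A : GRLOWJFA AB σ} {p r : σ} {l : List (List AB)}
    (h : Seg A p l r) :
    Relation.ReflTransGen (GRLOWJFA.Step A) ([], p, l.flatten) ([], r, []) := by
  induction h with
  | nil => simpa using Relation.ReflTransGen.refl
  | @cons p q r x l hr hs ih =>
    refine Relation.ReflTransGen.head ?_ ih
    have := GRLOWJFA.Step.rule (A := A) (p := p) (q := q) (x := x) [] [] l.flatten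
      hr (nosub_nil A p) noov_nil
    simpa using this

/-- from an accepting run extract an accepting path consuming the same letters -/
lemma run_to_seg {A : GRLOWJFA AB σ} {qf : σ} :
    ∀ (c : List AB × σ × List AB),
    Relation.ReflTransGen (GRLOWJFA.Step A) c ([], qf, []) →
    ∃ l, Seg A c.2.1 l qf ∧
      l.flatten.count AB.a = (c.1 ++ c.2.2).count AB.a ∧
      l.flatten.count AB.b = (c.1 ++ c.2.2).count AB.b := by
  intro c h
  induction h using Relation.ReflTransGen.head_induction_on with
  | refl => exact ⟨[], Seg.nil _, by simp, by simp⟩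
  | head hstep hrest ih =>
    cases hstep with
    | rule t u v hr hns hov =>
      obtain ⟨l, hl, ha, hb⟩ := ih
      refine ⟨_ :: l, Seg.cons hr hl, ?_, ?_⟩ <;>
        · simp only [List.flatten_cons, List.count_append, List.append_assoc] at *
          omega
    | ret x y hx hns =>
      obtain ⟨l, hl, ha, hb⟩ := ih
      exact ⟨l, hl, by simpa using ha, by simpa using hb⟩

end Impossible
lemma flatten_len_le {K : ℕ} : ∀ (l : List (List AB)), (∀ x ∈ l, x.length ≤ K) →
    l.flatten.length ≤ K * l.length := by
  intro l
  induction l with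
  | nil => intro _; simp
  | cons x l ih =>
    intro h
    simp only [List.flatten_cons, List.length_append, List.length_cons]
    have h1 := h x (List.mem_cons_self)
    have h2 := ih (fun y hy => h y (List.mem_cons_of_mem _ hy))
    have : K * (l.length + 1) = K * l.length + K := by ring
    omega

lemma not_grlowj : ¬ GRLOWJ (L1 ∩ L2) := by
  rintro ⟨σ, hfin, A, hL⟩
  haveI := hfin
  haveI := Fintype.ofFinite σ
  classical
  have hab : (AB.b = AB.a) = False := eq_false (by decide)
  have hba : (AB.a = AB.b) = False := eq_false (by decide)
  -- a bound on the lengths of rule words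
  obtain ⟨K₀, hK₀⟩ := (A.finite.image (fun r => r.2.1.length)).bddAbove
  set K : ℕ := K₀ + 1 with hKdef
  have hK : ∀ r ∈ A.rules, r.2.1.length ≤ K :=
    fun r hr => le_trans (hK₀ ⟨r, hr, rfl⟩) (Nat.le_succ _)
  set m : ℕ := Fintype.card σ with hmdef
  set P : ℕ := K * (m + 1) with hPdef
  set N : ℕ := P + K with hNdef
  have hKpos : 1 ≤ K := Nat.le_add_left _ _
  have hKP : K ≤ P := Nat.le_mul_of_pos_right _ (by omega)
  have hNpos : 1 ≤ N := by omega
  -- the word aᴺbᴺ is accepted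
  have hw : (replicate N AB.a ++ replicate N AB.b) ∈ A.language := by
    rw [hL]
    constructor
    · exact ⟨N, N, rfl⟩
    · show _ = _
      simp [List.count_append, List.count_replicate, hab, hba]
  obtain ⟨qf, hqf, hrun⟩ := hw
  obtain ⟨l, hseg, hca, hcb⟩ := run_to_seg ([], A.start, replicate N AB.a ++ replicate N AB.b) hrun
  simp [List.count_append, List.count_replicate, hab, hba] at hca hcb
  -- the flattened path word is also accepted, hence must be aᴺbᴺ
  have hzacc : l.flatten ∈ A.language := ⟨qf, hqf, hseg.run⟩
  rw [hL] at hzacc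
  obtain ⟨⟨n', m', hshape⟩, -⟩ := hzacc
  have hn' : n' = N := by
    have := congrArg (List.count AB.a) hshape
    simp [List.count_append, List.count_replicate, hab, hba] at this
    omega
  have hm' : m' = N := by
    have := congrArg (List.count AB.b) hshape
    simp [List.count_append, List.count_replicate, hab, hba] at this
    omega
  subst hn'; subst hm'
  have hflat : l.flatten = replicate N AB.a ++ replicate N AB.b := hshape
  -- elements of `l` are rule words
  have hlen : ∀ x ∈ l, x.length ≤ K := by
    intro x hx
    obtain ⟨p', q', hr⟩ := hseg.mem_rules x hx
    exact hK _ hr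
  have hnel : ∀ x ∈ l, x ≠ [] := by
    intro x hx
    obtain ⟨p', q', hr⟩ := hseg.mem_rules x hx
    exact A.ne _ hr
  -- the pure-a prefix of `l`
  set la : List (List AB) := l.takeWhile (fun x => x.all (fun c => c == AB.a)) with hladef
  have hla_mem : ∀ x ∈ la, ∀ c ∈ x, c = AB.a := by
    intro x hx c hc
    have := List.mem_takeWhile_imp hx
    rw [List.all_eq_true] at this
    simpa using this c hc
  have hla_pre : la ++ l.dropWhile (fun x => x.all (fun c => c == AB.a)) = l :=
    List.takeWhile_append_dropWhile
  have hla_sub : ∀ x ∈ la, x ∈ l := by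
    intro x hx
    rw [← hla_pre]
    exact List.mem_append_left _ hx
  have hla_flat : la.flatten = replicate la.flatten.length AB.a := by
    rw [List.eq_replicate_length]
    intro c hc
    obtain ⟨x, hx, hcx⟩ := List.mem_flatten.mp hc
    exact hla_mem x hx c hcx
  -- la is long
  have hla_long : m + 2 ≤ la.length := by
    have hSig : P + 1 ≤ la.flatten.length := by
      cases hld : l.dropWhile (fun x => x.all (fun c => c == AB.a)) with
      | nil =>
        exfalso
        have hfla : l.flatten = la.flatten := by rw [← hla_pre, hld]; simp
        have hb0 := congrArg (List.count AB.b) hfla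
        rw [hflat, hla_flat] at hb0
        simp [List.count_append, List.count_replicate, hab, hba] at hb0
      | cons x ld' =>
        have hxl : x ∈ l := by
          rw [← hla_pre, hld]; exact List.mem_append_right _ (List.mem_cons_self)
        have hxb : AB.b ∈ x := by
          have hnotall : ¬ (x.all (fun c => c == AB.a) = true) := by
            have := List.head?_dropWhile_not (fun x => x.all (fun c => c == AB.a)) l
            rw [hld] at this
            simpa using this
          rw [List.all_eq_true] at hnotall
          push_neg at hnotall
          obtain ⟨c, hc, hcne⟩ := hnotall
          have : c = AB.b := by cases c <;> simp_all
          exact this ▸ hc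
        by_contra hcon
        push_neg at hcon
        -- then la.flatten ++ x is a prefix of aᴺbᴺ of length ≤ N containing a b
        have hpre : la.flatten ++ x <+: l.flatten := by
          refine ⟨ld'.flatten, ?_⟩
          conv_rhs => rw [← hla_pre, hld]
          simp [List.flatten_append]
        have hlenx : (la.flatten ++ x).length ≤ N := by
          have := hlen x hxl
          simp only [List.length_append]
          omega
        have heq := List.prefix_iff_eq_take.mp hpre
        rw [hflat, List.take_append] at heq
        have hrep : (la.flatten ++ x).length - (replicate N AB.a).length = 0 := by
          simp only [List.length_replicate]
          omega
        rw [hrep, List.take_zero, List.append_nil, List.take_replicate] at heq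
        have hbmem : AB.b ∈ la.flatten ++ x := List.mem_append_right _ hxb
        rw [heq] at hbmem
        exact absurd (List.eq_of_mem_replicate hbmem) (by decide)
    have hKla := flatten_len_le la (fun x hx => hlen x (hla_sub x hx))
    have hPK : P < K * la.length := by omega
    rw [hPdef] at hPK
    have := Nat.lt_of_mul_lt_mul_left hPK
    omega
  -- pigeonhole on the states along the path
  have hseg' : Seg A A.start l qf := hseg
  have hjlen : la.length ≤ l.length := by
    calc la.length ≤ la.length + (l.dropWhile (fun x => x.all (fun c => c == AB.a))).length :=
          Nat.le_add_right _ _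
    _ = l.length := by rw [← List.length_append, hla_pre]
  let f : Fin (la.length + 1) → σ := fun i => (hseg'.split i).choose
  have hf : ∀ i : Fin (la.length + 1),
      Seg A A.start (l.take (i:ℕ)) (f i) ∧ Seg A (f i) (l.drop (i:ℕ)) qf :=
    fun i => (hseg'.split i).choose_spec
  have main : ∀ (i j : Fin (la.length + 1)), (i:ℕ) < (j:ℕ) → f i = f j → False := by
    intro i j hlt hfeq
    have hjla : (j:ℕ) ≤ la.length := Nat.le_of_lt_succ j.isLt
    have hjl : (j:ℕ) ≤ l.length := le_trans hjla hjlen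
    set mid : List (List AB) := (l.take (j:ℕ)).drop (i:ℕ) with hmiddef
    have htj : l.take (j:ℕ) = l.take (i:ℕ) ++ mid := by
      have h1 : List.take (i:ℕ) (l.take (j:ℕ)) = l.take (i:ℕ) := by
        rw [List.take_take]
        congr 1
        omega
      conv_lhs => rw [← List.take_append_drop (i:ℕ) (l.take (j:ℕ))]
      rw [h1]
    have hmid_seg : Seg A (f i) mid (f i) := by
      have h2 := (hf j).1
      rw [htj] at h2
      have h3 := Seg.mid (hf i).1 h2
      rwa [← hfeq] at h3
    have hmid_len : mid.length = (j:ℕ) - (i:ℕ) := by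
      rw [hmiddef, List.length_drop, List.length_take]
      omega
    have hmid_ne : mid ≠ [] := by
      intro h
      rw [h] at hmid_len
      simp at hmid_len
      omega
    have hmid_la : ∀ x ∈ mid, x ∈ la := by
      intro x hx
      have hx1 : x ∈ l.take (j:ℕ) := List.Sublist.mem hx (List.drop_sublist _ _)
      have htakla : l.take (j:ℕ) = la.take (j:ℕ) := by
        conv_lhs => rw [← hla_pre]
        rw [List.take_append]
        have hj0 : (j:ℕ) - la.length = 0 := by omega
        rw [hj0, List.take_zero, List.append_nil]
      rw [htakla] at hx1
      exact List.Sublist.mem hx1 (List.take_sublist _ _)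
    have hmidflat : mid.flatten = replicate mid.flatten.length AB.a := by
      rw [List.eq_replicate_length]
      intro c hc
      obtain ⟨x, hx, hcx⟩ := List.mem_flatten.mp hc
      exact hla_mem x (hmid_la x hx) c hcx
    have hmidpos : 1 ≤ mid.flatten.length := by
      cases hm : mid with
      | nil => exact absurd hm hmid_ne
      | cons x mid' =>
        have hxla : x ∈ la := hmid_la x (hm ▸ List.mem_cons_self)
        have hxne : x ≠ [] := hnel x (hla_sub x hxla)
        have hxpos : 1 ≤ x.length := List.length_pos_iff.mpr hxne
        simp only [List.flatten_cons, List.length_append]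
        omega
    have hmida : mid.flatten.count AB.a = mid.flatten.length := by
      conv_lhs => rw [hmidflat]
      simp [List.count_replicate]
    have hmidb : mid.flatten.count AB.b = 0 := by
      conv_lhs => rw [hmidflat]
      simp [List.count_replicate, hab]
    -- the pumped path is accepting
    have hbig : Seg A A.start (l.take (i:ℕ) ++ (mid ++ (mid ++ l.drop (j:ℕ)))) qf := by
      refine (hf i).1.append (hmid_seg.append (hmid_seg.append ?_))
      have h5 := (hf j).2
      rwa [← hfeq] at h5
    have hzacc2 : (l.take (i:ℕ) ++ (mid ++ (mid ++ l.drop (j:ℕ)))).flatten ∈ A.language :=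
      ⟨qf, hqf, hbig.run⟩
    rw [hL] at hzacc2
    obtain ⟨-, hbal⟩ := hzacc2
    have hbal' : (l.take (i:ℕ) ++ (mid ++ (mid ++ l.drop (j:ℕ)))).flatten.count AB.a
        = (l.take (i:ℕ) ++ (mid ++ (mid ++ l.drop (j:ℕ)))).flatten.count AB.b := hbal
    have hdecomp : l.take (i:ℕ) ++ (mid ++ l.drop (j:ℕ)) = l := by
      have h3 : l.take (j:ℕ) ++ l.drop (j:ℕ) = l := List.take_append_drop _ _
      rw [htj] at h3
      simpa [List.append_assoc] using h3
    have h4a := congrArg (fun w => (List.flatten w).count AB.a) hdecomp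
    have h4b := congrArg (fun w => (List.flatten w).count AB.b) hdecomp
    simp only [List.flatten_append, List.count_append] at h4a h4b hbal'
    rw [hca] at h4a
    rw [hcb] at h4b
    omega
  obtain ⟨i, j, hij, hfeq⟩ := Fintype.exists_ne_map_eq_of_card_lt f
    (by rw [Fintype.card_fin, ← hmdef]; omega)
  rcases Nat.lt_trichotomy (i:ℕ) (j:ℕ) with h | h | h
  · exact main i j h hfeq
  · exact hij (Fin.ext h)
  · exact main j i h hfeq.symm
end Stmt17

theorem stmt_17 :
    ∃ L1 L2 : Set (List AB), GRLOWJ L1 ∧ GRLOWJ L2 ∧ ¬ GRLOWJ (L1 ∩ L2) :=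
  ⟨Stmt17.L1, Stmt17.L2,
    ⟨Stmt17.St3, inferInstance, Stmt17.A1, Stmt17.A1_lang⟩,
    ⟨Unit, inferInstance, Stmt17.A2, Stmt17.A2_lang⟩,
    Stmt17.not_grlowj⟩
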